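/- Let a, b be arbitrary reals, η ∈ D_r a local configuration, l ≥ 1 an integer, and (x_1,…,x_l) ∈ C_l(l) an l-tuple of vertices whose balls B(x_1,r),…,B(x_l,r) form l distinct equivalence classes for the connectivity relation. Then μ_{a,b}(I_{x_1}^η = 1, …, I_{x_l}^η = 1) = E_{a,b}[ ∏_{i=1}^l g_i ], where g_i is the random variable σ ↦ μ_{a,b}(I_{x_i}^η = 1 | σ_{δB(x_i,r)}), i.e. the events I_{x_i}^η = 1 factor after conditioning each ball on its own boundary. -/

import Mathlib

open scoped ENNReal BigOperators
open Filter

namespace Ising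

noncomputable section

/-- The `L_p` norm (`1 ≤ p ≤ ∞`) of an integer vector, via the `PiLp` norm on `ℝ^d`. -/
def lpNorm (p : ℝ≥0∞) [Fact (1 ≤ p)] {d : ℕ} (z : Fin d → ℤ) : ℝ :=
  ‖(WithLp.equiv p (Fin d → ℝ)).symm (fun i => (z i : ℝ))‖

lemma lpNorm_neg (p : ℝ≥0∞) [Fact (1 ≤ p)] {d : ℕ} (z : Fin d → ℤ) :
    lpNorm p (fun i => -(z i)) = lpNorm p z := by
  unfold lpNorm
  have h : ((WithLp.equiv p (Fin d → ℝ)).symm (fun i => ((-(z i) : ℤ) : ℝ)))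
      = -((WithLp.equiv p (Fin d → ℝ)).symm fun i => ((z i : ℤ) : ℝ)) := by
    have : (fun i => ((-(z i) : ℤ) : ℝ)) = -(fun i => ((z i : ℤ) : ℝ)) := by
      funext i; simp
    rw [this]; rfl
  rw [h, norm_neg]

/-- Vertex set of the `d`-dimensional lattice torus of size `n`:
`{0, …, n-1}^d` with componentwise arithmetic modulo `n`. -/
abbrev Vtx (d n : ℕ) := Fin d → ZMod n

/-- Configurations: a spin (`true` = `+1`, `false` = `-1`) at each vertex. -/
abbrev Conf (d n : ℕ) := Vtx d n → Bool

/-- The spin value (`±1`) of a Boolean. -/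
def spin (s : Bool) : ℝ := if s then 1 else -1

/-- The lattice torus `G_n`: distinct vertices `x, y` are adjacent iff `y - x`
(componentwise modulo `n`) admits an integer representative `z` with `‖z‖_p ≤ ρ`. -/
def torus (d ρ : ℕ) (p : ℝ≥0∞) [Fact (1 ≤ p)] (n : ℕ) : SimpleGraph (Vtx d n) where
  Adj x y := x ≠ y ∧ ∃ z : Fin d → ℤ,
    (∀ i, ((z i : ZMod n) = y i - x i)) ∧ lpNorm p z ≤ (ρ : ℝ)
  symm := by
    constructor
    rintro x y ⟨hxy, z, hz, hn⟩
    refine ⟨hxy.symm, fun i => -(z i), fun i => ?_, by rw [lpNorm_neg]; exact hn⟩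
    push_cast
    rw [hz i]; ring
  loopless := ⟨fun x h => h.1 rfl⟩

/-- The corresponding (infinite) lattice graph on `ℤ^d`, used as a reference to define
local configurations: distinct `x, y` are adjacent iff `‖y - x‖_p ≤ ρ`. -/
def latticeZ (d ρ : ℕ) (p : ℝ≥0∞) [Fact (1 ≤ p)] : SimpleGraph (Fin d → ℤ) where
  Adj x y := x ≠ y ∧ lpNorm p (fun i => y i - x i) ≤ (ρ : ℝ)
  symm := by
    constructor
    rintro x y ⟨hxy, hn⟩
    refine ⟨hxy.symm, ?_⟩
    have h : (fun i => x i - y i) = (fun i => -(y i - x i)) := by funext i; ring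
    rw [h, lpNorm_neg]; exact hn
  loopless := ⟨fun x h => h.1 rfl⟩

/-- The ball `B(x,r)` of center `x` and radius `r` for the graph distance. -/
def gball {V : Type*} (G : SimpleGraph V) (x : V) (r : ℕ) : Set V :=
  {y | G.Reachable x y ∧ G.dist x y ≤ r}

/-- The reference ball `B(0,r)` (in `ℤ^d`). -/
def refBall (d ρ : ℕ) (p : ℝ≥0∞) [Fact (1 ≤ p)] (r : ℕ) : Set (Fin d → ℤ) :=
  gball (latticeZ d ρ p) 0 r

/-- A local configuration of radius `r`: an element of `D_r = {-1,+1}^{B(0,r)}`. -/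
abbrev LocalConfig (d ρ : ℕ) (p : ℝ≥0∞) [Fact (1 ≤ p)] (r : ℕ) :=
  ↥(refBall d ρ p r) → Bool

/-- `k(η)`: the number of positive vertices of a local configuration `η`. -/
def kOf (d ρ : ℕ) (p : ℝ≥0∞) [Fact (1 ≤ p)] (r : ℕ) (η : LocalConfig d ρ p r) : ℕ :=
  Set.ncard {v : ↥(refBall d ρ p r) | η v = true}

/-- The common degree of the vertices (number of neighbors of `0` in the lattice). -/
def degZ (d ρ : ℕ) (p : ℝ≥0∞) [Fact (1 ≤ p)] : ℕ :=
  Set.ncard {z : Fin d → ℤ | (latticeZ d ρ p).Adj 0 z}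

/-- The perimeter `γ(η) = V·k(η) - 2·#{edges with both endpoints positive}`; the
number of ordered adjacent pairs of positive vertices is twice the number of such edges. -/
def perim (d ρ : ℕ) (p : ℝ≥0∞) [Fact (1 ≤ p)] (r : ℕ) (η : LocalConfig d ρ p r) : ℕ :=
  degZ d ρ p * kOf d ρ p r η -
    Set.ncard {q : ↥(refBall d ρ p r) × ↥(refBall d ρ p r) |
      (latticeZ d ρ p).Adj q.1.1 q.2.1 ∧ η q.1 = true ∧ η q.2 = true}

/-- `η` is clean if every vertex at graph distance exactly `r` from `0` is negative. -/
def Clean (d ρ : ℕ) (p : ℝ≥0∞) [Fact (1 ≤ p)] (r : ℕ) (η : LocalConfig d ρ p r) : Prop :=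
  ∀ v : ↥(refBall d ρ p r), (latticeZ d ρ p).dist 0 v.1 = r → η v = false

/-- The translate `η_x` of `η` occurs at `x` in the configuration `σ`. -/
def occursAt (d ρ : ℕ) (p : ℝ≥0∞) [Fact (1 ≤ p)] (r n : ℕ) (η : LocalConfig d ρ p r)
    (x : Vtx d n) (σ : Conf d n) : Prop :=
  ∀ v : ↥(refBall d ρ p r), σ (x + fun i => ((v.1 i : ZMod n))) = η v

/-- The indicator `I_x^η` (as a real number). -/
def occInd (d ρ : ℕ) (p : ℝ≥0∞) [Fact (1 ≤ p)] (r n : ℕ) (η : LocalConfig d ρ p r)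
    (x : Vtx d n) (σ : Conf d n) : ℝ := by
  classical exact if occursAt d ρ p r n η x σ then 1 else 0

/-- `X_n(η) = Σ_x I_x^η`: the number of copies of `η` in `G_n`. -/
def Xcount (d ρ : ℕ) (p : ℝ≥0∞) [Fact (1 ≤ p)] (r n : ℕ) (η : LocalConfig d ρ p r)
    (σ : Conf d n) : ℕ :=
  Set.ncard {x : Vtx d n | occursAt d ρ p r n η x σ}

/-- The interaction term `Σ_{{x,y} ∈ E_n} σ(x)σ(y)`. -/
def pairSum (d ρ : ℕ) (p : ℝ≥0∞) [Fact (1 ≤ p)] (n : ℕ) (σ : Conf d n) : ℝ :=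
  ∑' e : ↥(torus d ρ p n).edgeSet,
    Sym2.lift ⟨fun x y => spin (σ x) * spin (σ y), fun _ _ => mul_comm _ _⟩
      (e : Sym2 (Vtx d n))

/-- The Hamiltonian `a Σ_x σ(x) + b Σ_{{x,y} ∈ E_n} σ(x)σ(y)`. -/
def hamiltonian (d ρ : ℕ) (p : ℝ≥0∞) [Fact (1 ≤ p)] (n : ℕ) (a b : ℝ) (σ : Conf d n) : ℝ :=
  a * (∑' x : Vtx d n, spin (σ x)) + b * pairSum d ρ p n σ

/-- The (unnormalized) Gibbs weight of a configuration. -/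
def weight (d ρ : ℕ) (p : ℝ≥0∞) [Fact (1 ≤ p)] (n : ℕ) (a b : ℝ) (σ : Conf d n) : ℝ :=
  Real.exp (hamiltonian d ρ p n a b σ)

/-- The partition function `Z_{a,b}`. -/
def partZ (d ρ : ℕ) (p : ℝ≥0∞) [Fact (1 ≤ p)] (n : ℕ) (a b : ℝ) : ℝ :=
  ∑' σ : Conf d n, weight d ρ p n a b σ

/-- The Ising (Gibbs) probability `μ_{a,b}(A)` of an event `A ⊆ X_n`. -/
def prob (d ρ : ℕ) (p : ℝ≥0∞) [Fact (1 ≤ p)] (n : ℕ) (a b : ℝ) (A : Set (Conf d n)) : ℝ :=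
  (∑' σ : ↥A, weight d ρ p n a b (σ : Conf d n)) / partZ d ρ p n a b

/-- The expectation `E_{a,b}[f]`. -/
def expect (d ρ : ℕ) (p : ℝ≥0∞) [Fact (1 ≤ p)] (n : ℕ) (a b : ℝ) (f : Conf d n → ℝ) : ℝ :=
  (∑' σ : Conf d n, weight d ρ p n a b σ * f σ) / partZ d ρ p n a b

/-- The variance `Var_{a,b}[f]`. -/
def varE (d ρ : ℕ) (p : ℝ≥0∞) [Fact (1 ≤ p)] (n : ℕ) (a b : ℝ) (f : Conf d n → ℝ) : ℝ :=
  expect d ρ p n a b (fun σ => (f σ - expect d ρ p n a b f) ^ 2)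

/-- The event `{I_x^η = 1}`. -/
def event (d ρ : ℕ) (p : ℝ≥0∞) [Fact (1 ≤ p)] (r n : ℕ) (η : LocalConfig d ρ p r)
    (x : Vtx d n) : Set (Conf d n) :=
  {σ | occursAt d ρ p r n η x σ}

/-- The event that a configuration agrees with `σ₀` on `W`. -/
def agreeOn (d n : ℕ) (W : Set (Vtx d n)) (σ₀ : Conf d n) : Set (Conf d n) :=
  {τ | ∀ x ∈ W, τ x = σ₀ x}

/-- The conditional probability `μ_{a,b}(A | σ₀ on W)`. -/
def condProb (d ρ : ℕ) (p : ℝ≥0∞) [Fact (1 ≤ p)] (n : ℕ) (a b : ℝ) (A : Set (Conf d n))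
    (W : Set (Vtx d n)) (σ₀ : Conf d n) : ℝ :=
  prob d ρ p n a b (A ∩ agreeOn d n W σ₀) / prob d ρ p n a b (agreeOn d n W σ₀)

/-- The exterior boundary `δV` of a set of vertices of the torus. -/
def boundary (d ρ : ℕ) (p : ℝ≥0∞) [Fact (1 ≤ p)] (n : ℕ) (V : Set (Vtx d n)) :
    Set (Vtx d n) :=
  {y | y ∉ V ∧ ∃ x ∈ V, (torus d ρ p n).Adj x y}

/-- The ball `B(x,R)` in the torus. -/
def tball (d ρ : ℕ) (p : ℝ≥0∞) [Fact (1 ≤ p)] (n : ℕ) (x : Vtx d n) (R : ℕ) :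
    Set (Vtx d n) :=
  gball (torus d ρ p n) x R

/-- The distribution (probability mass function on `ℕ`) of an integer-valued observable. -/
def lawOf (d ρ : ℕ) (p : ℝ≥0∞) [Fact (1 ≤ p)] (n : ℕ) (a b : ℝ) (X : Conf d n → ℕ) :
    ℕ → ℝ :=
  fun m => prob d ρ p n a b {σ | X σ = m}

/-- The distribution on `ℕ` of a real-valued (integer-valued in fact) observable. -/
def lawR (d ρ : ℕ) (p : ℝ≥0∞) [Fact (1 ≤ p)] (n : ℕ) (a b : ℝ) (X : Conf d n → ℝ) :
    ℕ → ℝ :=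
  fun m => prob d ρ p n a b {σ | X σ = (m : ℝ)}

/-- The Poisson distribution with parameter `θ`, as a pmf on `ℕ`. -/
def poissonPMF (θ : ℝ) : ℕ → ℝ :=
  fun m => Real.exp (-θ) * θ ^ m / (Nat.factorial m : ℝ)

/-- Total variation distance between two distributions on `ℕ`:
`d_TV(μ,ν) = sup_A |μ(A) - ν(A)|`. -/
def dTV (f g : ℕ → ℝ) : ℝ :=
  ⨆ A : Set ℕ, |(∑' m : ↥A, f (m : ℕ)) - ∑' m : ↥A, g (m : ℕ)|

/-- The clean extension `η̊ ∈ D_{r+1}` of `η ∈ D_r`: it agrees with `η` on `B(0,r)` and is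
negative at every vertex at distance exactly `r+1` from `0`. -/
def ringExt (d ρ : ℕ) (p : ℝ≥0∞) [Fact (1 ≤ p)] (r : ℕ) (η : LocalConfig d ρ p r) :
    LocalConfig d ρ p (r + 1) := by
  classical exact fun v => if h : v.1 ∈ refBall d ρ p r then η ⟨v.1, h⟩ else false

/-- `D_r(η) = {η' ∈ D_r : V_+(η') ⊇ V_+(η)}`. -/
def Dfam (d ρ : ℕ) (p : ℝ≥0∞) [Fact (1 ≤ p)] (r : ℕ) (η : LocalConfig d ρ p r) :
    Set (LocalConfig d ρ p r) :=
  {η' | ∀ v, η v = true → η' v = true}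

/-- `Ī_x^η = Σ_{η' ∈ D_r(η)} I_x^{η'}`. -/
def barInd (d ρ : ℕ) (p : ℝ≥0∞) [Fact (1 ≤ p)] (r n : ℕ) (η : LocalConfig d ρ p r)
    (x : Vtx d n) (σ : Conf d n) : ℝ :=
  ∑' η' : ↥(Dfam d ρ p r η), occInd d ρ p r n (η' : LocalConfig d ρ p r) x σ

/-- `X̄_n(η) = Σ_x Ī_x^η`. -/
def Xbar (d ρ : ℕ) (p : ℝ≥0∞) [Fact (1 ≤ p)] (r n : ℕ) (η : LocalConfig d ρ p r)
    (σ : Conf d n) : ℝ :=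
  ∑' x : Vtx d n, barInd d ρ p r n η x σ

/-- The closed neighbourhood `B̄ = B ∪ δB` of a torus ball. -/
def cball (d ρ : ℕ) (p : ℝ≥0∞) [Fact (1 ≤ p)] (n : ℕ) (x : Vtx d n) (r : ℕ) :
    Set (Vtx d n) :=
  tball d ρ p n x r ∪ boundary d ρ p n (tball d ρ p n x r)

/-- One step of the connectivity relation between the balls of radius `r` centered at the
entries of a tuple: `B̄(x_i) ∩ B(x_j) ≠ ∅`. -/
def stepRel (d ρ : ℕ) (p : ℝ≥0∞) [Fact (1 ≤ p)] (n r : ℕ) {l : ℕ} (x : Fin l → Vtx d n)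
    (i j : Fin l) : Prop :=
  (cball d ρ p n (x i) r ∩ tball d ρ p n (x j) r).Nonempty

/-- The number of equivalence classes, for the connectivity relation, of the set of balls
`{B(x_1,r), …, B(x_l,r)}`. -/
def numClasses (d ρ : ℕ) (p : ℝ≥0∞) [Fact (1 ≤ p)] (n r : ℕ) {l : ℕ}
    (x : Fin l → Vtx d n) : ℕ :=
  Set.ncard (Set.range fun i : Fin l =>
    {j : Fin l | Relation.EqvGen (stepRel d ρ p n r x) i j})

/-- `C_l(s)`: the set of `l`-tuples of vertices whose set of balls of radius `r` is composed
of exactly `s` equivalence classes for the connectivity relation. -/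
def tupleClass (d ρ : ℕ) (p : ℝ≥0∞) [Fact (1 ≤ p)] (n r l s : ℕ) :
    Set (Fin l → Vtx d n) :=
  {x | numClasses d ρ p n r x = s}


lemma abs_le_lpNorm {d : ℕ} (p : ℝ≥0∞) [Fact (1 ≤ p)] (z : Fin d → ℤ) (i : Fin d) :
    (|z i| : ℝ) ≤ lpNorm p z := by
  have h1 : (1:ℝ≥0∞) ≤ p := Fact.out
  unfold lpNorm
  set f : PiLp p (fun _ : Fin d => ℝ) := (WithLp.equiv p (Fin d → ℝ)).symm (fun i => (z i : ℝ))
  have hfi : f i = (z i : ℝ) := rfl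
  have hthis : |(z i : ℝ)| = ‖f i‖ := by rw [hfi]; simp [Real.norm_eq_abs]
  rw [hthis]
  rcases eq_or_ne p ∞ with hp | hp
  · subst hp
    rw [PiLp.norm_eq_ciSup]
    exact le_ciSup (f := fun j => ‖f j‖) (Set.Finite.bddAbove (Set.finite_range _)) i
  · have hptop : 0 < p.toReal := ENNReal.toReal_pos (by intro h; rw [h] at h1; simp at h1) hp
    rw [PiLp.norm_eq_sum hptop]
    have h2 : ‖f i‖ = (‖f i‖ ^ p.toReal) ^ (1 / p.toReal) := by
      rw [← Real.rpow_mul (norm_nonneg _), mul_one_div, div_self hptop.ne', Real.rpow_one]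
    rw [h2]
    apply Real.rpow_le_rpow (Real.rpow_nonneg (norm_nonneg _) _)
    · exact Finset.single_le_sum (f := fun j => ‖f j‖ ^ p.toReal)
        (fun j _ => Real.rpow_nonneg (norm_nonneg _) _) (Finset.mem_univ i)
    · positivity
lemma torus_adj_of_latticeZ {d ρ n : ℕ} (p : ℝ≥0∞) [Fact (1 ≤ p)] (hρn : ρ < n)
    (x : Vtx d n) {u v : Fin d → ℤ} (h : (latticeZ d ρ p).Adj u v) :
    (torus d ρ p n).Adj (x + fun i => ((u i : ZMod n))) (x + fun i => ((v i : ZMod n))) := by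
  obtain ⟨hne, hnorm⟩ := (h : u ≠ v ∧ lpNorm p (fun i => v i - u i) ≤ (ρ : ℝ))
  refine ⟨?_, fun i => v i - u i, fun i => ?_, hnorm⟩
  · intro hEq
    apply hne
    funext i
    have h2 : ((u i : ZMod n)) = ((v i : ZMod n)) := by
      have := congrFun hEq i
      simpa using this
    have h3 : (n:ℤ) ∣ (v i - u i) := by
      have := (ZMod.intCast_eq_intCast_iff' _ _ _).mp h2
      exact Int.ModEq.dvd this
    have h4 := (abs_le_lpNorm p (fun i => v i - u i) i).trans hnorm
    have h5 : |v i - u i| < (n:ℤ) := by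
      have hh : (ρ:ℝ) < (n:ℝ) := by exact_mod_cast hρn
      exact_mod_cast h4.trans_lt hh
    have h6 : v i - u i = 0 := by
      by_contra h0
      have : (n:ℤ) ≤ |v i - u i| := Int.le_of_dvd (abs_pos.mpr h0) ((dvd_abs _ _).mpr h3)
      omega
    omega
  · push_cast
    simp only [Pi.add_apply]
    ring
/-- The translation map from the lattice into the torus, as a graph homomorphism. -/
def transHom {d ρ n : ℕ} (p : ℝ≥0∞) [Fact (1 ≤ p)] (hρn : ρ < n) (x : Vtx d n) :
    latticeZ d ρ p →g torus d ρ p n where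
  toFun := fun u => x + fun i => ((u i : ZMod n))
  map_rel' := fun h => torus_adj_of_latticeZ p hρn x h

lemma transHom_zero {d ρ n : ℕ} (p : ℝ≥0∞) [Fact (1 ≤ p)] (hρn : ρ < n) (x : Vtx d n) :
    transHom p hρn x 0 = x := by
  show (x + fun i => (((0:Fin d → ℤ) i : ZMod n))) = x
  funext i
  simp

lemma mem_tball_of_refBall {d ρ r n : ℕ} (p : ℝ≥0∞) [Fact (1 ≤ p)] (hρn : ρ < n)
    (x : Vtx d n) {v : Fin d → ℤ} (hv : v ∈ refBall d ρ p r) :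
    (x + fun i => ((v i : ZMod n))) ∈ tball d ρ p n x r := by
  obtain ⟨hreach, hdist⟩ := hv
  obtain ⟨w, hw⟩ := hreach.exists_walk_length_eq_dist
  refine ⟨⟨(w.map (transHom p hρn x)).copy (transHom_zero p hρn x) rfl⟩, ?_⟩
  calc (torus d ρ p n).dist x _
      ≤ ((w.map (transHom p hρn x)).copy (transHom_zero p hρn x) rfl).length :=
        SimpleGraph.dist_le _
    _ = w.length := by
        rw [SimpleGraph.Walk.length_copy, SimpleGraph.Walk.length_map]
    _ ≤ r := by rw [hw]; exact hdist
lemma sep_of_tupleClass {d ρ n r l : ℕ} (p : ℝ≥0∞) [Fact (1 ≤ p)]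
    {x : Fin l → Vtx d n} (hx : x ∈ tupleClass d ρ p n r l l) :
    ∀ i j : Fin l, i ≠ j → cball d ρ p n (x i) r ∩ tball d ρ p n (x j) r = ∅ := by
  classical
  intro i j hij
  set R := stepRel d ρ p n r x with hR
  have hEq : Equivalence (Relation.EqvGen R) := Relation.EqvGen.is_equivalence R
  set cls : Fin l → Set (Fin l) := fun i => {j | Relation.EqvGen R i j} with hcls
  have hinj : Function.Injective cls := by
    have h1 : Set.range cls = ↑(Finset.image cls Finset.univ) := by
      ext s; simp
    have h2 : (Finset.image cls Finset.univ).card = l := by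
      have := hx
      simp only [tupleClass, Set.mem_setOf_eq, numClasses] at this
      rw [← hcls] at this
      rw [h1] at this
      rwa [Set.ncard_coe_finset] at this
    have h3 : Set.InjOn cls ↑(Finset.univ : Finset (Fin l)) := by
      rw [← Finset.card_image_iff]
      simp [h2]
    intro a b hab
    exact h3 (by simp) (by simp) hab
  rw [Set.eq_empty_iff_forall_notMem]
  intro y hy
  have hstep : R i j := ⟨y, hy⟩
  have : cls i = cls j := by
    ext k
    simp only [hcls, Set.mem_setOf_eq]
    constructor
    · intro h; exact hEq.trans (hEq.symm (Relation.EqvGen.rel _ _ hstep)) h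
    · intro h; exact hEq.trans (Relation.EqvGen.rel _ _ hstep) h
  exact hij (hinj this)
/- ### Generic finite-sum helpers -/

lemma tsum_set_eq {α : Type*} [Finite α] (A : Set α) (f : α → ℝ) :
    ∑' σ : ↥A, f ↑σ = ∑ σ ∈ A.toFinite.toFinset, f σ := by
  classical
  haveI : Fintype ↥A := A.toFinite.fintype
  rw [tsum_fintype, ← Finset.sum_coe_sort (A.toFinite.toFinset) f]
  exact Fintype.sum_equiv (Equiv.subtypeEquivRight
    (by intro x; simp [Set.Finite.mem_toFinset]))
    _ _ (fun x => rfl)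

/-- A propositional indicator avoiding decidability bookkeeping. -/
def indP (P : Prop) : ℝ := by classical exact if P then 1 else 0

lemma indP_of (P : Prop) (h : P) : indP P = 1 := by unfold indP; rw [if_pos h]
lemma indP_of_not (P : Prop) (h : ¬P) : indP P = 0 := by unfold indP; rw [if_neg h]
lemma indP_nonneg (P : Prop) : 0 ≤ indP P := by
  unfold indP; split <;> norm_num
lemma indP_congr {P Q : Prop} (h : P ↔ Q) : indP P = indP Q := by
  by_cases hP : P
  · rw [indP_of _ hP, indP_of _ (h.mp hP)]
  · rw [indP_of_not _ hP, indP_of_not _ (fun q => hP (h.mpr q))]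

lemma prod_indP {ι : Type*} (s : Finset ι) (P : ι → Prop) :
    ∏ i ∈ s, indP (P i) = indP (∀ i ∈ s, P i) := by
  classical
  by_cases h : ∀ i ∈ s, P i
  · rw [indP_of _ h, Finset.prod_eq_one (fun i hi => indP_of _ (h i hi))]
  · rw [indP_of_not _ h]
    push_neg at h
    obtain ⟨i, hi, hPi⟩ := h
    exact Finset.prod_eq_zero hi (indP_of_not _ hPi)

lemma sum_toFinset_eq_sum_ite {α : Type*} [Fintype α] (A : Set α) (f : α → ℝ) :
    ∑ σ ∈ A.toFinite.toFinset, f σ = ∑ σ : α, indP (σ ∈ A) * f σ := by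
  classical
  have h1 : A.toFinite.toFinset = Finset.univ.filter (· ∈ A) := by
    ext σ; simp [Set.Finite.mem_toFinset]
  rw [h1, Finset.sum_filter]
  refine Finset.sum_congr rfl (fun σ _ => ?_)
  by_cases h : σ ∈ A
  · rw [if_pos h, indP_of _ h, one_mul]
  · rw [if_neg h, indP_of_not _ h, zero_mul]

lemma sum_split_set {α M : Type*} [Fintype α] [AddCommMonoid M] (B : Set α) (f : α → M) :
    ∑ v : α, f v = ∑ v ∈ B.toFinite.toFinset, f v + ∑ v ∈ Bᶜ.toFinite.toFinset, f v := by
  classical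
  rw [← Finset.sum_union (by
    simp only [Finset.disjoint_left, Set.Finite.mem_toFinset, Set.mem_compl_iff]
    exact fun a ha h => h ha)]
  apply Finset.sum_congr _ (fun _ _ => rfl)
  ext v; simp [Set.Finite.mem_toFinset]
  tauto

lemma sum_split_pred {α M : Type*} [Finite α] [AddCommMonoid M] (S : Set α) (P : α → Prop)
    (f : α → M) :
    ∑ x ∈ S.toFinite.toFinset, f x
      = ∑ x ∈ {x | x ∈ S ∧ P x}.toFinite.toFinset, f x
        + ∑ x ∈ {x | x ∈ S ∧ ¬ P x}.toFinite.toFinset, f x := by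
  classical
  rw [← Finset.sum_union (by simp [Finset.disjoint_left, Set.Finite.mem_toFinset]; tauto)]
  apply Finset.sum_congr _ (fun _ _ => rfl)
  ext v; simp [Set.Finite.mem_toFinset]; tauto

section Core

variable (d ρ n : ℕ) (p : ℝ≥0∞) [Fact (1 ≤ p)] [NeZero n] (a b : ℝ)

/-- The contribution of an edge to the interaction term. -/
def edgeTerm (σ : Conf d n) (e : Sym2 (Vtx d n)) : ℝ :=
  Sym2.lift ⟨fun x y => spin (σ x) * spin (σ y), fun _ _ => mul_comm _ _⟩ e

/-- The part of the Hamiltonian depending on vertices/edges touching `B`. -/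
def EinH (B : Set (Vtx d n)) (σ : Conf d n) : ℝ :=
  a * ∑ v ∈ B.toFinite.toFinset, spin (σ v)
    + b * ∑ e ∈ {e | e ∈ (torus d ρ p n).edgeSet ∧ ∃ v ∈ e, v ∈ B}.toFinite.toFinset,
        edgeTerm d n σ e

/-- The part of the Hamiltonian not touching `B`. -/
def EoutH (B : Set (Vtx d n)) (σ : Conf d n) : ℝ :=
  a * ∑ v ∈ Bᶜ.toFinite.toFinset, spin (σ v)
    + b * ∑ e ∈ {e | e ∈ (torus d ρ p n).edgeSet ∧ ¬ ∃ v ∈ e, v ∈ B}.toFinite.toFinset,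
        edgeTerm d n σ e

lemma hamiltonian_split (B : Set (Vtx d n)) (σ : Conf d n) :
    hamiltonian d ρ p n a b σ = EinH d ρ n p a b B σ + EoutH d ρ n p a b B σ := by
  unfold hamiltonian EinH EoutH pairSum
  have hv : ∑' x : Vtx d n, spin (σ x) = ∑ x : Vtx d n, spin (σ x) := tsum_fintype _
  have he : ∑' e : ↥(torus d ρ p n).edgeSet,
      Sym2.lift ⟨fun x y => spin (σ x) * spin (σ y), fun _ _ => mul_comm _ _⟩ (e : Sym2 (Vtx d n))
      = ∑ e ∈ (torus d ρ p n).edgeSet.toFinite.toFinset, edgeTerm d n σ e :=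
    tsum_set_eq _ _
  rw [hv, he, sum_split_set B (fun v => spin (σ v)),
    sum_split_pred (torus d ρ p n).edgeSet (fun e => ∃ v ∈ e, v ∈ B) (edgeTerm d n σ)]
  ring

lemma weight_split (B : Set (Vtx d n)) (σ : Conf d n) :
    weight d ρ p n a b σ = Real.exp (EinH d ρ n p a b B σ) * Real.exp (EoutH d ρ n p a b B σ) := by
  rw [weight, ← Real.exp_add, hamiltonian_split d ρ n p a b B σ]

lemma EinH_eq (B : Set (Vtx d n)) {σ τ : Conf d n}
    (h : ∀ v, v ∈ B ∪ boundary d ρ p n B → σ v = τ v) :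
    EinH d ρ n p a b B σ = EinH d ρ n p a b B τ := by
  unfold EinH
  congr 1
  · congr 1
    apply Finset.sum_congr rfl
    intro v hv
    rw [Set.Finite.mem_toFinset] at hv
    rw [h v (Or.inl hv)]
  · congr 1
    apply Finset.sum_congr rfl
    intro e he
    rw [Set.Finite.mem_toFinset] at he
    induction e using Sym2.ind with
    | _ y z =>
      obtain ⟨hadj, w, hw, hwB⟩ := he
      rw [SimpleGraph.mem_edgeSet] at hadj
      have hyz : y ∈ B ∨ z ∈ B := by
        rcases Sym2.mem_iff.mp hw with h' | h' <;> [left; right] <;> rwa [← h']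
      have hmem : ∀ u, u ∈ B ∪ boundary d ρ p n B → σ u = τ u := h
      have hy : σ y = τ y := by
        rcases hyz with h' | h'
        · exact hmem y (Or.inl h')
        · by_cases hyB : y ∈ B
          · exact hmem y (Or.inl hyB)
          · exact hmem y (Or.inr ⟨hyB, z, h', hadj.symm⟩)
      have hz : σ z = τ z := by
        rcases hyz with h' | h'
        · by_cases hzB : z ∈ B
          · exact hmem z (Or.inl hzB)
          · exact hmem z (Or.inr ⟨hzB, y, h', hadj⟩)
        · exact hmem z (Or.inl h')
      show spin (σ y) * spin (σ z) = spin (τ y) * spin (τ z)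
      rw [hy, hz]

lemma EoutH_eq (B : Set (Vtx d n)) {σ τ : Conf d n}
    (h : ∀ v, v ∉ B → σ v = τ v) :
    EoutH d ρ n p a b B σ = EoutH d ρ n p a b B τ := by
  unfold EoutH
  congr 1
  · congr 1
    apply Finset.sum_congr rfl
    intro v hv
    rw [Set.Finite.mem_toFinset] at hv
    rw [h v hv]
  · congr 1
    apply Finset.sum_congr rfl
    intro e he
    rw [Set.Finite.mem_toFinset] at he
    induction e using Sym2.ind with
    | _ y z =>
      obtain ⟨hadj, hne⟩ := he
      push_neg at hne
      have hy : y ∉ B := hne y (by simp [Sym2.mem_iff])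
      have hz : z ∉ B := hne z (by simp [Sym2.mem_iff])
      show spin (σ y) * spin (σ z) = spin (τ y) * spin (τ z)
      rw [h y hy, h z hz]

end Core
section Core2

attribute [local instance] Classical.propDecidable

set_option linter.unusedSectionVars false

variable (d ρ n : ℕ) (p : ℝ≥0∞) [Fact (1 ≤ p)] [NeZero n] (a b : ℝ)

lemma indP_and (P Q : Prop) : indP (P ∧ Q) = indP P * indP Q := by
  by_cases hP : P
  · by_cases hQ : Q
    · rw [indP_of _ hP, indP_of _ hQ, indP_of _ ⟨hP, hQ⟩, mul_one]
    · rw [indP_of_not _ hQ, indP_of_not _ (fun h => hQ h.2), mul_zero]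
  · rw [indP_of_not _ hP, indP_of_not _ (fun h => hP h.1), zero_mul]

/-- Combine a configuration on `B` with a configuration on `Bᶜ`. -/
def cmb (B : Set (Vtx d n)) (ξ : ↥B → Bool) (τ : ↥(Bᶜ) → Bool) : Conf d n :=
  fun v => if h : v ∈ B then ξ ⟨v, h⟩ else τ ⟨v, h⟩

lemma cmb_apply_mem {B : Set (Vtx d n)} (ξ : ↥B → Bool) (τ : ↥(Bᶜ) → Bool) {v : Vtx d n}
    (h : v ∈ B) : cmb d n B ξ τ v = ξ ⟨v, h⟩ := dif_pos h

lemma cmb_apply_not_mem {B : Set (Vtx d n)} (ξ : ↥B → Bool) (τ : ↥(Bᶜ) → Bool) {v : Vtx d n}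
    (h : v ∉ B) : cmb d n B ξ τ v = τ ⟨v, h⟩ := dif_neg h

/-- Restriction to `Bᶜ`. -/
def rstOut (B : Set (Vtx d n)) (σ : Conf d n) : ↥(Bᶜ) → Bool := fun v => σ v.1

lemma cmb_rst (B : Set (Vtx d n)) (σ : Conf d n) :
    cmb d n B (fun v => σ v.1) (rstOut d n B σ) = σ := by
  funext v
  by_cases h : v ∈ B
  · rw [cmb_apply_mem _ _ _ _ h]
  · rw [cmb_apply_not_mem _ _ _ _ h]; rfl

lemma rstOut_cmb (B : Set (Vtx d n)) (ξ : ↥B → Bool) (τ : ↥(Bᶜ) → Bool) :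
    rstOut d n B (cmb d n B ξ τ) = τ := by
  funext v
  show cmb d n B ξ τ v.1 = τ v
  rw [cmb_apply_not_mem _ _ _ _ v.2]

lemma rstIn_cmb (B : Set (Vtx d n)) (ξ : ↥B → Bool) (τ : ↥(Bᶜ) → Bool) :
    (fun v : ↥B => cmb d n B ξ τ v.1) = ξ := by
  funext v
  show cmb d n B ξ τ v.1 = ξ v
  rw [cmb_apply_mem _ _ _ _ v.2]

lemma cmb_eq_off {B : Set (Vtx d n)} (ξ ξ' : ↥B → Bool) (τ : ↥(Bᶜ) → Bool) {v : Vtx d n}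
    (h : v ∉ B) : cmb d n B ξ τ v = cmb d n B ξ' τ v := by
  rw [cmb_apply_not_mem _ _ _ _ h, cmb_apply_not_mem _ _ _ _ h]

lemma sum_cmb (B : Set (Vtx d n)) (f : Conf d n → ℝ) :
    ∑ σ : Conf d n, f σ
      = ∑ τ : ↥(Bᶜ) → Bool, ∑ ξ : ↥B → Bool, f (cmb d n B ξ τ) := by
  have hbij : Function.Bijective
      (fun q : (↥(Bᶜ) → Bool) × (↥B → Bool) => cmb d n B q.2 q.1) := by
    constructor
    · intro q q' hq
      have h1 := congrArg (rstOut d n B) hq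
      rw [rstOut_cmb, rstOut_cmb] at h1
      have h2 := congrArg (fun σ => (fun v : ↥B => σ v.1)) hq
      simp only [rstIn_cmb] at h2
      exact Prod.ext h1 h2
    · intro σ
      exact ⟨(rstOut d n B σ, fun v => σ v.1), cmb_rst d n B σ⟩
  calc ∑ σ : Conf d n, f σ
      = ∑ q : (↥(Bᶜ) → Bool) × (↥B → Bool), f (cmb d n B q.2 q.1) :=
        (Fintype.sum_bijective _ hbij _ _ (fun q => rfl)).symm
    _ = ∑ τ : ↥(Bᶜ) → Bool, ∑ ξ : ↥B → Bool, f (cmb d n B ξ τ) := Fintype.sum_prod_type _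

end Core2
section Core3

attribute [local instance] Classical.propDecidable
set_option linter.unusedSectionVars false

variable (d ρ n : ℕ) (p : ℝ≥0∞) [Fact (1 ≤ p)] [NeZero n] (a b : ℝ)

/-- Inner partial partition function with indicator of `A`. -/
def SAq (B : Set (Vtx d n)) (A : Set (Conf d n)) (σ : Conf d n) : ℝ :=
  ∑ ξ : ↥B → Bool, indP (cmb d n B ξ (rstOut d n B σ) ∈ A)
      * Real.exp (EinH d ρ n p a b B (cmb d n B ξ (rstOut d n B σ)))

/-- Outer partial partition function with boundary-agreement indicator. -/
def Tq (B : Set (Vtx d n)) (σ : Conf d n) : ℝ :=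
  ∑ τ : ↥(Bᶜ) → Bool,
    indP (∀ v ∈ boundary d ρ p n B, cmb d n B (fun _ => false) τ v = σ v)
      * Real.exp (EoutH d ρ n p a b B (cmb d n B (fun _ => false) τ))

lemma NFACT (B : Set (Vtx d n)) (A : Set (Conf d n))
    (hA : ∀ σ' τ' : Conf d n, (∀ v ∈ B, σ' v = τ' v) → (σ' ∈ A ↔ τ' ∈ A)) (σ : Conf d n) :
    ∑ σ' : Conf d n, indP (σ' ∈ A ∩ agreeOn d n (boundary d ρ p n B) σ)
        * weight d ρ p n a b σ'
      = SAq d ρ n p a b B A σ * Tq d ρ n p a b B σ := by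
  set W := boundary d ρ p n B with hWdef
  have hWB : ∀ v ∈ W, v ∉ B := fun v hv => hv.1
  rw [sum_cmb d n B (f := fun σ' => indP (σ' ∈ A ∩ agreeOn d n W σ) * weight d ρ p n a b σ')]
  have hper : ∀ τ : ↥(Bᶜ) → Bool,
      (∑ ξ : ↥B → Bool, indP (cmb d n B ξ τ ∈ A ∩ agreeOn d n W σ)
          * weight d ρ p n a b (cmb d n B ξ τ))
        = SAq d ρ n p a b B A σ
            * (indP (∀ v ∈ W, cmb d n B (fun _ => false) τ v = σ v)
                * Real.exp (EoutH d ρ n p a b B (cmb d n B (fun _ => false) τ))) := by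
    intro τ
    have hagr_iff : ∀ ξ : ↥B → Bool,
        (cmb d n B ξ τ ∈ agreeOn d n W σ) ↔
          (∀ v ∈ W, cmb d n B (fun _ => false) τ v = σ v) := by
      intro ξ
      constructor
      · intro h v hv
        rw [← cmb_eq_off d n ξ (fun _ => false) τ (hWB v hv)]
        exact h v hv
      · intro h v hv
        rw [cmb_eq_off d n ξ (fun _ => false) τ (hWB v hv)]
        exact h v hv
    by_cases hagr : ∀ v ∈ W, cmb d n B (fun _ => false) τ v = σ v
    · have hterm : ∀ ξ : ↥B → Bool,
          indP (cmb d n B ξ τ ∈ A ∩ agreeOn d n W σ) * weight d ρ p n a b (cmb d n B ξ τ)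
            = (indP (cmb d n B ξ (rstOut d n B σ) ∈ A)
                * Real.exp (EinH d ρ n p a b B (cmb d n B ξ (rstOut d n B σ))))
              * (indP (∀ v ∈ W, cmb d n B (fun _ => false) τ v = σ v)
                * Real.exp (EoutH d ρ n p a b B (cmb d n B (fun _ => false) τ))) := by
        intro ξ
        have hcross : ∀ v, v ∈ B ∪ W → cmb d n B ξ τ v = cmb d n B ξ (rstOut d n B σ) v := by
          intro v hv
          rcases hv with hv | hv
          · rw [cmb_apply_mem d n ξ τ hv, cmb_apply_mem d n ξ (rstOut d n B σ) hv]
          · have hvB := hWB v hv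
            rw [cmb_apply_not_mem d n ξ τ hvB, cmb_apply_not_mem d n ξ (rstOut d n B σ) hvB]
            show _ = σ v
            rw [← hagr v hv, cmb_apply_not_mem d n (fun _ => false) τ hvB]
        have hmemA : (cmb d n B ξ τ ∈ A) ↔ (cmb d n B ξ (rstOut d n B σ) ∈ A) :=
          hA _ _ (fun v hv => hcross v (Or.inl hv))
        have hEin : EinH d ρ n p a b B (cmb d n B ξ τ)
            = EinH d ρ n p a b B (cmb d n B ξ (rstOut d n B σ)) :=
          EinH_eq d ρ n p a b B hcross
        have hEout : EoutH d ρ n p a b B (cmb d n B ξ τ)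
            = EoutH d ρ n p a b B (cmb d n B (fun _ => false) τ) :=
          EoutH_eq d ρ n p a b B (fun v hv => cmb_eq_off d n ξ (fun _ => false) τ hv)
        rw [Set.mem_inter_iff, indP_and, indP_congr hmemA, indP_congr (hagr_iff ξ),
          weight_split d ρ n p a b B, hEin, hEout]
        ring
      rw [Finset.sum_congr rfl (fun ξ _ => hterm ξ), ← Finset.sum_mul]
      rfl
    · have hzero : ∀ ξ : ↥B → Bool,
          indP (cmb d n B ξ τ ∈ A ∩ agreeOn d n W σ) = 0 := fun ξ =>
        indP_of_not _ (fun hmem => hagr ((hagr_iff ξ).mp hmem.2))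
      rw [Finset.sum_congr rfl (fun ξ _ => by rw [hzero ξ, zero_mul]),
        Finset.sum_const, smul_zero, indP_of_not _ hagr]
      ring
  rw [Finset.sum_congr rfl (fun τ _ => hper τ), ← Finset.mul_sum]
  rfl

lemma prob_eq_sum (A : Set (Conf d n)) :
    prob d ρ p n a b A
      = (∑ σ : Conf d n, indP (σ ∈ A) * weight d ρ p n a b σ) / partZ d ρ p n a b := by
  unfold prob
  rw [tsum_set_eq A (weight d ρ p n a b), sum_toFinset_eq_sum_ite]

lemma partZ_pos : 0 < partZ d ρ p n a b := by
  unfold partZ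
  rw [tsum_fintype]
  exact Finset.sum_pos (fun σ _ => Real.exp_pos _) Finset.univ_nonempty

lemma Tq_pos (B : Set (Vtx d n)) (σ : Conf d n) : 0 < Tq d ρ n p a b B σ := by
  unfold Tq
  apply Finset.sum_pos' (fun τ _ => mul_nonneg (indP_nonneg _) (Real.exp_pos _).le)
  refine ⟨rstOut d n B σ, Finset.mem_univ _, ?_⟩
  have h1 : ∀ v ∈ boundary d ρ p n B,
      cmb d n B (fun _ => false) (rstOut d n B σ) v = σ v := by
    intro v hv
    rw [cmb_apply_not_mem d n (fun _ => false) (rstOut d n B σ) hv.1]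
    rfl
  rw [indP_of _ h1, one_mul]
  exact Real.exp_pos _

lemma SAq_univ_pos (B : Set (Vtx d n)) (σ : Conf d n) :
    0 < SAq d ρ n p a b B Set.univ σ := by
  unfold SAq
  apply Finset.sum_pos (fun ξ _ => ?_) Finset.univ_nonempty
  rw [indP_of _ (Set.mem_univ _), one_mul]
  exact Real.exp_pos _

lemma agreeOn_congr {W : Set (Vtx d n)} {σ σ' : Conf d n} (h : ∀ v ∈ W, σ v = σ' v) :
    agreeOn d n W σ = agreeOn d n W σ' := by
  ext τ
  constructor <;> intro hτ v hv
  · rw [← h v hv]; exact hτ v hv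
  · rw [h v hv]; exact hτ v hv

lemma condProb_congr (A : Set (Conf d n)) {W : Set (Vtx d n)} {σ σ' : Conf d n}
    (h : ∀ v ∈ W, σ v = σ' v) :
    condProb d ρ p n a b A W σ = condProb d ρ p n a b A W σ' := by
  unfold condProb
  rw [agreeOn_congr d n h]

lemma star_id (B : Set (Vtx d n)) (A : Set (Conf d n))
    (hA : ∀ σ' τ' : Conf d n, (∀ v ∈ B, σ' v = τ' v) → (σ' ∈ A ↔ τ' ∈ A)) (σ : Conf d n) :
    ∑ ξ : ↥B → Bool, indP (cmb d n B ξ (rstOut d n B σ) ∈ A)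
        * weight d ρ p n a b (cmb d n B ξ (rstOut d n B σ))
      = condProb d ρ p n a b A (boundary d ρ p n B) σ
        * ∑ ξ : ↥B → Bool, weight d ρ p n a b (cmb d n B ξ (rstOut d n B σ)) := by
  set W := boundary d ρ p n B with hWdef
  have hEout : ∀ ξ : ↥B → Bool,
      EoutH d ρ n p a b B (cmb d n B ξ (rstOut d n B σ)) = EoutH d ρ n p a b B σ := by
    intro ξ
    apply EoutH_eq d ρ n p a b B
    intro v hv
    rw [cmb_apply_not_mem d n ξ (rstOut d n B σ) hv]
    rfl
  have h3 : (∑ ξ : ↥B → Bool, indP (cmb d n B ξ (rstOut d n B σ) ∈ A)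
        * weight d ρ p n a b (cmb d n B ξ (rstOut d n B σ)))
      = SAq d ρ n p a b B A σ * Real.exp (EoutH d ρ n p a b B σ) := by
    rw [Finset.sum_congr rfl (fun ξ _ => by
      rw [weight_split d ρ n p a b B, hEout ξ, ← mul_assoc]), ← Finset.sum_mul]
    rfl
  have h4 : (∑ ξ : ↥B → Bool, weight d ρ p n a b (cmb d n B ξ (rstOut d n B σ)))
      = SAq d ρ n p a b B Set.univ σ * Real.exp (EoutH d ρ n p a b B σ) := by
    have e : ∀ ξ : ↥B → Bool, weight d ρ p n a b (cmb d n B ξ (rstOut d n B σ))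
        = (indP (cmb d n B ξ (rstOut d n B σ) ∈ (Set.univ : Set (Conf d n)))
            * Real.exp (EinH d ρ n p a b B (cmb d n B ξ (rstOut d n B σ))))
          * Real.exp (EoutH d ρ n p a b B σ) := by
      intro ξ
      rw [indP_of _ (Set.mem_univ _), one_mul, weight_split d ρ n p a b B, hEout ξ]
    rw [Finset.sum_congr rfl (fun ξ _ => e ξ), ← Finset.sum_mul]
    rfl
  have hZ : partZ d ρ p n a b ≠ 0 := (partZ_pos d ρ n p a b).ne'
  have hT : Tq d ρ n p a b B σ ≠ 0 := (Tq_pos d ρ n p a b B σ).ne'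
  have hSU : SAq d ρ n p a b B Set.univ σ ≠ 0 := (SAq_univ_pos d ρ n p a b B σ).ne'
  have hcond : condProb d ρ p n a b A W σ
      = SAq d ρ n p a b B A σ / SAq d ρ n p a b B Set.univ σ := by
    unfold condProb
    rw [prob_eq_sum, prob_eq_sum]
    have e1 : ∑ σ' : Conf d n, indP (σ' ∈ A ∩ agreeOn d n W σ) * weight d ρ p n a b σ'
        = SAq d ρ n p a b B A σ * Tq d ρ n p a b B σ := NFACT d ρ n p a b B A hA σ
    have e2 : ∑ σ' : Conf d n, indP (σ' ∈ agreeOn d n W σ) * weight d ρ p n a b σ'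
        = SAq d ρ n p a b B Set.univ σ * Tq d ρ n p a b B σ := by
      rw [← Set.univ_inter (agreeOn d n W σ)]
      exact NFACT d ρ n p a b B Set.univ (fun _ _ _ => Iff.rfl) σ
    rw [e1, e2]
    field_simp
  rw [h3, h4, hcond]
  field_simp

lemma step_lemma (B : Set (Vtx d n)) (A : Set (Conf d n))
    (hA : ∀ σ' τ' : Conf d n, (∀ v ∈ B, σ' v = τ' v) → (σ' ∈ A ↔ τ' ∈ A))
    (F : Conf d n → ℝ)
    (hF : ∀ σ' τ' : Conf d n, (∀ v, v ∉ B → σ' v = τ' v) → F σ' = F τ') :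
    ∑ σ : Conf d n, weight d ρ p n a b σ * indP (σ ∈ A) * F σ
      = ∑ σ : Conf d n, weight d ρ p n a b σ
          * condProb d ρ p n a b A (boundary d ρ p n B) σ * F σ := by
  set W := boundary d ρ p n B with hWdef
  rw [sum_cmb d n B (f := fun σ => weight d ρ p n a b σ * indP (σ ∈ A) * F σ),
    sum_cmb d n B (f := fun σ => weight d ρ p n a b σ
      * condProb d ρ p n a b A W σ * F σ)]
  apply Finset.sum_congr rfl
  intro τ _
  have hoff : ∀ (ξ : ↥B → Bool) v, v ∉ B →
      cmb d n B ξ τ v = cmb d n B (fun _ => false) τ v :=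
    fun ξ v hv => cmb_eq_off d n ξ (fun _ => false) τ hv
  set σ₀ := cmb d n B (fun _ => false) τ with hσ₀
  have hFc : ∀ ξ : ↥B → Bool, F (cmb d n B ξ τ) = F σ₀ := fun ξ => hF _ _ (hoff ξ)
  have hgc : ∀ ξ : ↥B → Bool, condProb d ρ p n a b A W (cmb d n B ξ τ)
      = condProb d ρ p n a b A W σ₀ :=
    fun ξ => condProb_congr d ρ n p a b A (fun v hv => hoff ξ v hv.1)
  have hτrst : rstOut d n B σ₀ = τ := rstOut_cmb d n B (fun _ => false) τ
  have hcmb : ∀ ξ : ↥B → Bool, cmb d n B ξ τ = cmb d n B ξ (rstOut d n B σ₀) := by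
    intro ξ; rw [hτrst]
  calc ∑ ξ : ↥B → Bool,
        weight d ρ p n a b (cmb d n B ξ τ) * indP (cmb d n B ξ τ ∈ A) * F (cmb d n B ξ τ)
      = (∑ ξ : ↥B → Bool, indP (cmb d n B ξ (rstOut d n B σ₀) ∈ A)
          * weight d ρ p n a b (cmb d n B ξ (rstOut d n B σ₀))) * F σ₀ := by
        have e : ∀ ξ : ↥B → Bool,
            weight d ρ p n a b (cmb d n B ξ τ) * indP (cmb d n B ξ τ ∈ A)
                * F (cmb d n B ξ τ)
              = (indP (cmb d n B ξ (rstOut d n B σ₀) ∈ A)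
                  * weight d ρ p n a b (cmb d n B ξ (rstOut d n B σ₀))) * F σ₀ := by
          intro ξ
          rw [hFc ξ, hcmb ξ]; ring
        rw [Finset.sum_congr rfl (fun ξ _ => e ξ), ← Finset.sum_mul]
    _ = (condProb d ρ p n a b A W σ₀
          * ∑ ξ : ↥B → Bool, weight d ρ p n a b (cmb d n B ξ (rstOut d n B σ₀))) * F σ₀ := by
        rw [star_id d ρ n p a b B A hA σ₀]
    _ = ∑ ξ : ↥B → Bool, weight d ρ p n a b (cmb d n B ξ τ)
          * condProb d ρ p n a b A W (cmb d n B ξ τ) * F (cmb d n B ξ τ) := by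
        have e : ∀ ξ : ↥B → Bool,
            weight d ρ p n a b (cmb d n B ξ τ) * condProb d ρ p n a b A W (cmb d n B ξ τ)
                * F (cmb d n B ξ τ)
              = (condProb d ρ p n a b A W σ₀
                  * weight d ρ p n a b (cmb d n B ξ (rstOut d n B σ₀))) * F σ₀ := by
          intro ξ
          rw [hFc ξ, hgc ξ, hcmb ξ]; ring
        rw [Finset.sum_congr rfl (fun ξ _ => e ξ), ← Finset.sum_mul, ← Finset.mul_sum]

end Core3
section Final

attribute [local instance] Classical.propDecidable
set_option linter.unusedSectionVars false

variable (d ρ n : ℕ) (p : ℝ≥0∞) [Fact (1 ≤ p)] [NeZero n] (a b : ℝ)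

lemma expect_eq_sum (f : Conf d n → ℝ) :
    expect d ρ p n a b f
      = (∑ σ : Conf d n, weight d ρ p n a b σ * f σ) / partZ d ρ p n a b := by
  unfold expect
  rw [tsum_fintype]

end Final

/-- **Markov factorization over disconnected balls.**  For any reals `a, b`, any `η ∈ D_r`
and any `l`-tuple `(x_1, …, x_l) ∈ C_l(l)`,
`μ_{a,b}(I_{x_1}^η = 1, …, I_{x_l}^η = 1)
  = E_{a,b}[∏_i μ_{a,b}(I_{x_i}^η = 1 | ·_{δB(x_i,r)})]`. -/
theorem stmt_14
    (d ρ r l n : ℕ) (hd : 1 ≤ d) (hρ : 1 ≤ ρ) (hl : 1 ≤ l) (p : ℝ≥0∞) [Fact (1 ≤ p)]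
    (hn : 2 * ρ * l * (2 * r + 1) < n)
    (a b : ℝ) (η : LocalConfig d ρ p r)
    (x : Fin l → Vtx d n) (hx : x ∈ tupleClass d ρ p n r l l) :
    prob d ρ p n a b {σ | ∀ i : Fin l, occursAt d ρ p r n η (x i) σ}
      = expect d ρ p n a b (fun σ =>
          ∏ i : Fin l,
            condProb d ρ p n a b (event d ρ p r n η (x i))
              (boundary d ρ p n (tball d ρ p n (x i) r)) σ) := by
  classical
  have hnpos : 0 < n := lt_of_le_of_lt (Nat.zero_le _) hn
  haveI : NeZero n := ⟨hnpos.ne'⟩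
  have hρn : ρ < n := by
    have h1 : ρ ≤ 2 * ρ * l * (2 * r + 1) :=
      calc ρ ≤ 2 * ρ := by omega
        _ = 2 * ρ * 1 * 1 := by ring
        _ ≤ 2 * ρ * l * (2 * r + 1) :=
            Nat.mul_le_mul (Nat.mul_le_mul_left _ hl) (by omega)
    exact lt_of_le_of_lt h1 hn
  set B : Fin l → Set (Vtx d n) := fun i => tball d ρ p n (x i) r with hBdef
  set g : Fin l → Conf d n → ℝ := fun i σ =>
    condProb d ρ p n a b (event d ρ p r n η (x i)) (boundary d ρ p n (B i)) σ with hgdef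
  have hga : ∀ (j : Fin l) (σ : Conf d n),
      g j σ = condProb d ρ p n a b (event d ρ p r n η (x j)) (boundary d ρ p n (B j)) σ :=
    fun _ _ => rfl
  have hsep : ∀ i j : Fin l, i ≠ j →
      cball d ρ p n (x i) r ∩ tball d ρ p n (x j) r = ∅ := sep_of_tupleClass p hx
  have hmemB : ∀ (i : Fin l) (v : ↥(refBall d ρ p r)),
      (x i + fun k => ((v.1 k : ZMod n))) ∈ B i :=
    fun i v => mem_tball_of_refBall p hρn (x i) v.2
  have hA : ∀ i : Fin l, ∀ σ τ : Conf d n, (∀ v ∈ B i, σ v = τ v) →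
      (σ ∈ event d ρ p r n η (x i) ↔ τ ∈ event d ρ p r n η (x i)) := by
    intro i σ τ h
    constructor
    · intro hocc v; rw [← h _ (hmemB i v)]; exact hocc v
    · intro hocc v; rw [h _ (hmemB i v)]; exact hocc v
  -- disjointness facts
  have hBdisj : ∀ i j : Fin l, i ≠ j → ∀ v ∈ B j, v ∉ B i := by
    intro i j hij v hj hi
    have : v ∈ cball d ρ p n (x i) r ∩ tball d ρ p n (x j) r :=
      ⟨Set.subset_union_left hi, hj⟩
    rw [hsep i j hij] at this
    exact this
  have hWdisj : ∀ i j : Fin l, i ≠ j → ∀ v ∈ boundary d ρ p n (B j), v ∉ B i := by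
    intro i j hij v hj hi
    have : v ∈ cball d ρ p n (x j) r ∩ tball d ρ p n (x i) r :=
      ⟨Set.subset_union_right hj, hi⟩
    rw [hsep j i hij.symm] at this
    exact this
  -- the induction
  have key : ∀ s : Finset (Fin l),
      ∑ σ : Conf d n, weight d ρ p n a b σ *
        ((∏ i ∈ s, indP (σ ∈ event d ρ p r n η (x i))) * ∏ i ∈ sᶜ, g i σ)
      = ∑ σ : Conf d n, weight d ρ p n a b σ * ∏ i : Fin l, g i σ := by
    intro s
    induction s using Finset.induction_on with
    | empty => simp
    | @insert i s hi ih =>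
      set F : Conf d n → ℝ := fun σ =>
        (∏ j ∈ s, indP (σ ∈ event d ρ p r n η (x j))) * ∏ j ∈ (insert i s)ᶜ, g j σ
        with hF
      have hFa : ∀ σ : Conf d n, F σ =
          (∏ j ∈ s, indP (σ ∈ event d ρ p r n η (x j))) * ∏ j ∈ (insert i s)ᶜ, g j σ :=
        fun _ => rfl
      have hFdep : ∀ σ τ : Conf d n, (∀ v, v ∉ B i → σ v = τ v) → F σ = F τ := by
        intro σ τ h
        rw [hFa σ, hFa τ]
        congr 1
        · apply Finset.prod_congr rfl
          intro j hj
          have hij : i ≠ j := fun e => hi (e ▸ hj)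
          exact indP_congr (hA j σ τ (fun v hv => h v (hBdisj i j hij v hv)))
        · apply Finset.prod_congr rfl
          intro j hj
          have hij : i ≠ j := by
            intro e
            rw [Finset.mem_compl] at hj
            exact hj (e ▸ Finset.mem_insert_self i s)
          rw [hga j σ, hga j τ]
          exact condProb_congr d ρ n p a b _
            (fun v hv => h v (hWdisj i j hij v hv))
      have hstep := step_lemma d ρ n p a b (B i) (event d ρ p r n η (x i)) (hA i) F hFdep
      calc ∑ σ : Conf d n, weight d ρ p n a b σ *
            ((∏ j ∈ insert i s, indP (σ ∈ event d ρ p r n η (x j))) * ∏ j ∈ (insert i s)ᶜ, g j σ)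
          = ∑ σ : Conf d n, weight d ρ p n a b σ * indP (σ ∈ event d ρ p r n η (x i)) * F σ := by
            apply Finset.sum_congr rfl
            intro σ _
            rw [Finset.prod_insert hi, hFa σ]
            ring
        _ = ∑ σ : Conf d n, weight d ρ p n a b σ
              * condProb d ρ p n a b (event d ρ p r n η (x i)) (boundary d ρ p n (B i)) σ
              * F σ := hstep
        _ = ∑ σ : Conf d n, weight d ρ p n a b σ *
              ((∏ j ∈ s, indP (σ ∈ event d ρ p r n η (x j))) * ∏ j ∈ sᶜ, g j σ) := by
            apply Finset.sum_congr rfl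
            intro σ _
            rw [hFa σ]
            have hicompl : i ∈ sᶜ := Finset.mem_compl.mpr hi
            have h2 : ∏ j ∈ sᶜ, g j σ = g i σ * ∏ j ∈ (insert i s)ᶜ, g j σ := by
              rw [Finset.compl_insert, ← Finset.mul_prod_erase sᶜ (fun j => g j σ) hicompl]
            rw [h2, ← hga i σ]
            ring
        _ = ∑ σ : Conf d n, weight d ρ p n a b σ * ∏ i : Fin l, g i σ := ih
  -- assembly
  rw [prob_eq_sum d ρ n p a b, expect_eq_sum d ρ n p a b]
  congr 1
  have hnum : ∀ σ : Conf d n,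
      indP (σ ∈ {σ : Conf d n | ∀ i : Fin l, occursAt d ρ p r n η (x i) σ})
          * weight d ρ p n a b σ
        = weight d ρ p n a b σ *
            ((∏ i ∈ (Finset.univ : Finset (Fin l)), indP (σ ∈ event d ρ p r n η (x i)))
              * ∏ i ∈ (Finset.univ : Finset (Fin l))ᶜ, g i σ) := by
    intro σ
    rw [Finset.compl_univ, Finset.prod_empty, mul_one, prod_indP]
    have hiff : (σ ∈ {σ : Conf d n | ∀ i : Fin l, occursAt d ρ p r n η (x i) σ})
        ↔ (∀ i ∈ (Finset.univ : Finset (Fin l)), σ ∈ event d ρ p r n η (x i)) := by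
      constructor
      · intro h i _; exact h i
      · intro h i; exact h i (Finset.mem_univ i)
    rw [indP_congr hiff]
    ring
  rw [Finset.sum_congr rfl (fun σ _ => hnum σ), key Finset.univ]
end
end Ising
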